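/- Let X be a finite-dimensional real normed space, let F ⊆ X be a nonempty closed bounded convex set, and let Ω_1, …, Ω_n ⊆ X be nonempty closed sets at least one of which is bounded. If inf_{x ∈ X} T(x) < ∞ for T(x) := Σ_{i=1}^n T^F_{Ω_i}(x), then there exists x̄ ∈ X with T(x̄) = inf_{x ∈ X} T(x), i.e., the generalized Fermat–Torricelli problem of minimizing T over X admits an optimal solution. -/

import Mathlib

/-- The minimal time function `T^F_Ω(x) := inf{t ≥ 0 : Ω ∩ (x + tF) ≠ ∅}`,
with values in the extended reals (`sInf ∅ = ⊤`). -/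
noncomputable def minTime {X : Type*} [AddCommGroup X] [Module ℝ X]
    (F Ω : Set X) (x : X) : EReal :=
  sInf {r : EReal | ∃ t : ℝ, 0 ≤ t ∧ r = (t : EReal) ∧ ∃ f ∈ F, x + t • f ∈ Ω}

lemma ereal_coe_sum {ι : Type*} (s : Finset ι) (f : ι → ℝ) :
    ((∑ i ∈ s, f i : ℝ) : EReal) = ∑ i ∈ s, (f i : EReal) :=
  map_sum (⟨⟨Real.toEReal, EReal.coe_zero⟩, fun a b => EReal.coe_add a b⟩ :
    ℝ →+ EReal) f s

lemma minTime_nonneg {X : Type*} [AddCommGroup X] [Module ℝ X]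
    (F Ω : Set X) (x : X) : 0 ≤ minTime F Ω x := by
  refine le_sInf fun r hr => ?_
  obtain ⟨t, ht0, rfl, -⟩ := hr
  exact_mod_cast ht0

lemma minTime_attained {X : Type*} [NormedAddCommGroup X] [NormedSpace ℝ X]
    [FiniteDimensional ℝ X]
    (F Ω : Set X) (hFcl : IsClosed F) (hFbd : Bornology.IsBounded F)
    (hΩcl : IsClosed Ω) (x : X) (h : minTime F Ω x ≠ ⊤) :
    ∃ t : ℝ, 0 ≤ t ∧ minTime F Ω x = (t : EReal) ∧ ∃ f ∈ F, x + t • f ∈ Ω := by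
  set S : Set ℝ := {t : ℝ | 0 ≤ t ∧ ∃ f ∈ F, x + t • f ∈ Ω} with hS
  have hSne : S.Nonempty := by
    by_contra hemp
    apply h
    rw [minTime]
    refine (congrArg sInf (?_ : _ = (∅ : Set EReal))).trans sInf_empty
    rw [Set.eq_empty_iff_forall_notMem]
    rintro r ⟨t, ht0, rfl, f, hf, hm⟩
    exact hemp ⟨t, ht0, f, hf, hm⟩
  have hSbd : BddBelow S := ⟨0, fun t ht => ht.1⟩
  obtain ⟨u, -, hu_tend, hu_mem⟩ := exists_seq_tendsto_sInf hSne hSbd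
  choose f hfF hfm using fun j => (hu_mem j).2
  have hFK : IsCompact F := by
    rw [← hFcl.closure_eq]; exact hFbd.isCompact_closure
  obtain ⟨fb, hfbF, φ, hφ, hφt⟩ := hFK.tendsto_subseq hfF
  set t₀ : ℝ := sInf S with ht₀
  have ht₀0 : 0 ≤ t₀ := le_csInf hSne fun t ht => ht.1
  have htend : Filter.Tendsto (fun j => x + u (φ j) • f (φ j)) Filter.atTop
      (nhds (x + t₀ • fb)) :=
    Filter.Tendsto.const_add x ((hu_tend.comp hφ.tendsto_atTop).smul hφt)
  have hmem : x + t₀ • fb ∈ Ω :=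
    hΩcl.mem_of_tendsto htend (Filter.Eventually.of_forall fun j => hfm (φ j))
  refine ⟨t₀, ht₀0, le_antisymm ?_ ?_, fb, hfbF, hmem⟩
  · exact sInf_le ⟨t₀, ht₀0, rfl, fb, hfbF, hmem⟩
  · refine le_sInf fun r hr => ?_
    obtain ⟨t, ht0, rfl, hf⟩ := hr
    exact_mod_cast csInf_le hSbd ⟨ht0, hf⟩

/-- Existence of optimal solutions to the generalized Fermat–Torricelli problem in
finite dimensions. -/
theorem stmt_4 {X : Type*} [NormedAddCommGroup X] [NormedSpace ℝ X]
    [FiniteDimensional ℝ X]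
    (F : Set X) (hFne : F.Nonempty) (hFcl : IsClosed F)
    (hFbd : Bornology.IsBounded F) (hFconv : Convex ℝ F)
    (n : ℕ) (Ω : Fin n → Set X)
    (hΩne : ∀ i, (Ω i).Nonempty) (hΩcl : ∀ i, IsClosed (Ω i))
    (hbd : ∃ i, Bornology.IsBounded (Ω i))
    (hfin : (⨅ x : X, ∑ i, minTime F (Ω i) x) ≠ ⊤) :
    ∃ xb : X, (∑ i, minTime F (Ω i) xb) = ⨅ x : X, ∑ i, minTime F (Ω i) x := by
  classical
  obtain ⟨i0, hΩi0bd⟩ := hbd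
  set m : EReal := ⨅ x : X, ∑ i, minTime F (Ω i) x with hm
  have hm0 : (0 : EReal) ≤ m :=
    le_iInf fun x => Finset.sum_nonneg fun i _ => minTime_nonneg F (Ω i) x
  have hmbot : m ≠ ⊥ := fun hb => by simp [hb] at hm0
  set m' : ℝ := m.toReal with hm'
  have hmm : m = (m' : EReal) := (EReal.coe_toReal hfin hmbot).symm
  -- choose approximate minimizers together with attaining data
  have hex : ∀ k : ℕ, ∃ x : X, ∃ t : Fin n → ℝ, ∃ f : Fin n → X,
      (∀ i, 0 ≤ t i) ∧ (∀ i, f i ∈ F) ∧ (∀ i, x + t i • f i ∈ Ω i) ∧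
      (∀ i, minTime F (Ω i) x = (t i : EReal)) ∧
      ∑ i, t i < m' + 1 / (k + 1) := by
    intro k
    have hlt : m < ((m' + 1 / (k + 1) : ℝ) : EReal) := by
      rw [hmm, EReal.coe_lt_coe_iff]
      have : (0 : ℝ) < 1 / (k + 1) := by positivity
      linarith
    obtain ⟨x, hx⟩ := iInf_lt_iff.mp hlt
    have hne : ∀ i, minTime F (Ω i) x ≠ ⊤ := by
      intro i
      refine ne_top_of_lt (lt_of_le_of_lt ?_ (hx.trans (EReal.coe_lt_top _)))
      exact Finset.single_le_sum (fun j _ => minTime_nonneg F (Ω j) x)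
        (Finset.mem_univ i)
    choose t ht0 heq f hfF hfm using fun i =>
      minTime_attained F (Ω i) hFcl hFbd (hΩcl i) x (hne i)
    refine ⟨x, t, f, ht0, hfF, hfm, heq, ?_⟩
    have : ((∑ i, t i : ℝ) : EReal) < ((m' + 1 / (k + 1) : ℝ) : EReal) := by
      rw [ereal_coe_sum]
      calc ∑ i, ((t i : ℝ) : EReal) = ∑ i, minTime F (Ω i) x :=
            Finset.sum_congr rfl fun i _ => (heq i).symm
        _ < _ := hx
    exact_mod_cast this
  choose x t f ht0 hfF hfm heq hsum using hex
  -- uniform bounds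
  have hm'0 : 0 ≤ m' := by
    have := hm0
    rw [hmm] at this
    exact_mod_cast this
  obtain ⟨CF, hCF⟩ := isBounded_iff_forall_norm_le.mp hFbd
  have hCF0 : 0 ≤ CF := le_trans (norm_nonneg _) (hCF _ hFne.choose_spec)
  obtain ⟨CW, hCW⟩ := isBounded_iff_forall_norm_le.mp hΩi0bd
  have htB : ∀ k i, t k i ≤ m' + 1 := by
    intro k i
    have h1 : t k i ≤ ∑ j, t k j :=
      Finset.single_le_sum (fun j _ => ht0 k j) (Finset.mem_univ i)
    have h2 : (1 : ℝ) / (k + 1) ≤ 1 := by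
      rw [div_le_one (by positivity)]; simp
    linarith [hsum k]
  have hxB : ∀ k, ‖x k‖ ≤ CW + (m' + 1) * CF := by
    intro k
    have h1 : ‖x k + t k i0 • f k i0‖ ≤ CW := hCW _ (hfm k i0)
    have h2 : ‖t k i0 • f k i0‖ ≤ (m' + 1) * CF := by
      rw [norm_smul, Real.norm_eq_abs, abs_of_nonneg (ht0 k i0)]
      exact mul_le_mul (htB k i0) (hCF _ (hfF k i0)) (norm_nonneg _)
        (by linarith)
    calc ‖x k‖ = ‖x k + t k i0 • f k i0 - t k i0 • f k i0‖ := by rw [add_sub_cancel_right]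
      _ ≤ ‖x k + t k i0 • f k i0‖ + ‖t k i0 • f k i0‖ := norm_sub_le _ _
      _ ≤ _ := add_le_add h1 h2
  -- extract a convergent subsequence in the product space
  set P := X × (Fin n → ℝ) × (Fin n → X)
  set u : ℕ → P := fun k => (x k, t k, f k) with hu
  set C : ℝ := max (CW + (m' + 1) * CF) (max (m' + 1) CF) with hC
  have hC0 : 0 ≤ C :=
    hCF0.trans ((le_max_right _ _).trans (le_max_right _ _))
  have huK : ∀ k, u k ∈ Metric.closedBall (0 : P) C := by
    intro k
    rw [Metric.mem_closedBall, dist_zero_right]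
    have h1 : ‖x k‖ ≤ C := (hxB k).trans (le_max_left _ _)
    have h2 : ‖t k‖ ≤ C := by
      refine (pi_norm_le_iff_of_nonneg hC0).mpr fun i => ?_
      rw [Real.norm_eq_abs, abs_of_nonneg (ht0 k i)]
      exact (htB k i).trans ((le_max_left _ _).trans (le_max_right _ _))
    have h3 : ‖f k‖ ≤ C := by
      refine (pi_norm_le_iff_of_nonneg hC0).mpr fun i => ?_
      exact (hCF _ (hfF k i)).trans ((le_max_right _ _).trans (le_max_right _ _))
    calc ‖u k‖ = max ‖x k‖ (max ‖t k‖ ‖f k‖) := rfl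
      _ ≤ C := max_le h1 (max_le h2 h3)
  obtain ⟨a, -, φ, hφ, hφt⟩ :=
    (isCompact_closedBall (0 : P) C).tendsto_subseq huK
  obtain ⟨xb, tb, fb⟩ := a
  have hxb : Filter.Tendsto (fun k => x (φ k)) Filter.atTop (nhds xb) :=
    (continuous_fst.tendsto _).comp hφt
  have htb : ∀ i, Filter.Tendsto (fun k => t (φ k) i) Filter.atTop (nhds (tb i)) :=
    fun i => ((continuous_apply i).tendsto _).comp
      ((continuous_fst.tendsto _).comp ((continuous_snd.tendsto _).comp hφt))
  have hfb : ∀ i, Filter.Tendsto (fun k => f (φ k) i) Filter.atTop (nhds (fb i)) :=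
    fun i => ((continuous_apply i).tendsto _).comp
      ((continuous_snd.tendsto _).comp ((continuous_snd.tendsto _).comp hφt))
  -- properties of the limit
  have htb0 : ∀ i, 0 ≤ tb i := fun i =>
    ge_of_tendsto' (htb i) fun k => ht0 (φ k) i
  have hfbF : ∀ i, fb i ∈ F := fun i =>
    hFcl.mem_of_tendsto (hfb i) (Filter.Eventually.of_forall fun k => hfF (φ k) i)
  have hmemb : ∀ i, xb + tb i • fb i ∈ Ω i := by
    intro i
    refine (hΩcl i).mem_of_tendsto (hxb.add ((htb i).smul (hfb i)))
      (Filter.Eventually.of_forall fun k => hfm (φ k) i)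
  have hsumb : ∑ i, tb i ≤ m' := by
    have hlim1 : Filter.Tendsto (fun k => ∑ i, t (φ k) i) Filter.atTop
        (nhds (∑ i, tb i)) := tendsto_finset_sum _ fun i _ => htb i
    have hlim2 : Filter.Tendsto (fun k : ℕ => m' + 1 / ((φ k : ℝ) + 1))
        Filter.atTop (nhds (m' + 0)) :=
      Filter.Tendsto.const_add m'
        (tendsto_one_div_add_atTop_nhds_zero_nat.comp hφ.tendsto_atTop)
    rw [add_zero] at hlim2
    exact le_of_tendsto_of_tendsto' hlim1 hlim2 fun k => by
      have := hsum (φ k); push_cast at this ⊢; linarith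
  -- conclude
  refine ⟨xb, le_antisymm ?_ (iInf_le _ xb)⟩
  calc ∑ i, minTime F (Ω i) xb ≤ ∑ i, ((tb i : ℝ) : EReal) :=
        Finset.sum_le_sum fun i _ =>
          sInf_le ⟨tb i, htb0 i, rfl, fb i, hfbF i, hmemb i⟩
    _ = ((∑ i, tb i : ℝ) : EReal) := (ereal_coe_sum _ _).symm
    _ ≤ (m' : EReal) := by exact_mod_cast hsumb
    _ = m := hmm.symm
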